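/- With λ₁⁰ as above and for (j,m) ≥ (0,0), the value of ∂^{j+m}/(∂aʲ ∂bᵐ) e^{λ₁⁰(r,a,b)t} at (a,b) = (0,0) equals e^{-r^{2(σ-σ₁)}t} · r^{2j(σ₂-σ₁)+2m(σ-2σ₁)} · P_{j,m}(r^{2(σ-σ₁)} t), where P_{j,m} is a polynomial of degree at most j+m with P_{j,m}(0) = 0 when j+m ≥ 1, whose coefficients depend only on j, m, σ, σ₁, σ₂. -/

import Mathlib

open Real Set
open scoped ContDiff

noncomputable def Gamma1 (σ₁ σ₂ r a : ℝ) : ℝ := (1 + a * r ^ (2*(σ₂-σ₁)))⁻¹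

noncomputable def Gamma2 (σ σ₁ σ₂ r a b : ℝ) : ℝ :=
  Real.sqrt (1 - 4*b*r ^ (2*(σ-2*σ₁)) * (Gamma1 σ₁ σ₂ r a)^2)

/-- Mixed partial derivative `∂^{j+m}/(∂aʲ ∂bᵐ)`. -/
noncomputable def pderiv2 (j m : ℕ) (f : ℝ → ℝ → ℝ) (a b : ℝ) : ℝ :=
  iteratedDeriv m (fun b' => iteratedDeriv j (fun a' => f a' b') a) b

noncomputable def lam1 (σ σ₁ σ₂ r a b : ℝ) : ℝ :=
  -2 * r ^ (2*(σ-σ₁)) * Gamma1 σ₁ σ₂ r a * (1 + Gamma2 σ σ₁ σ₂ r a b)⁻¹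

noncomputable def lam2 (σ σ₁ σ₂ r a b : ℝ) : ℝ :=
  -(r ^ (2*σ₁) / 2) * (1 + a * r ^ (2*(σ₂-σ₁))) * (1 + Gamma2 σ σ₁ σ₂ r a b)

noncomputable def Gfun (σ σ₁ σ₂ r a b : ℝ) : ℝ :=
  r ^ (2*σ₁) * (1 + a * r ^ (2*(σ₂-σ₁))) * Gamma2 σ σ₁ σ₂ r a b


noncomputable def Ffun : ℝ × ℝ → ℝ :=
  fun p => -2 * (1 + p.1)⁻¹ * (1 + Real.sqrt (1 - 4 * p.2 * ((1 + p.1)⁻¹)^2))⁻¹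

def Uset : Set (ℝ × ℝ) := Set.Ioo (-(1/2) : ℝ) (1/2) ×ˢ Set.Ioo (-(1/16) : ℝ) (1/16)

lemma isOpen_Uset : IsOpen Uset := isOpen_Ioo.prod isOpen_Ioo

lemma mem_Uset_zero : ((0:ℝ), (0:ℝ)) ∈ Uset := by
  constructor <;> constructor <;> norm_num

lemma Uset_facts {p : ℝ × ℝ} (hp : p ∈ Uset) :
    (1 + p.1 ≠ 0) ∧ (1 - 4 * p.2 * ((1 + p.1)⁻¹)^2 ≠ 0) ∧
      (1 + Real.sqrt (1 - 4 * p.2 * ((1 + p.1)⁻¹)^2) ≠ 0) := by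
  obtain ⟨⟨h1, h2⟩, h3, h4⟩ := hp
  have hpos : (0:ℝ) < 1 + p.1 := by linarith
  have hne : 1 + p.1 ≠ 0 := ne_of_gt hpos
  have hinv : (1 + p.1)⁻¹ < 2 := by
    rw [inv_lt_iff_one_lt_mul₀ hpos]
    linarith
  have hinvpos : 0 < (1 + p.1)⁻¹ := inv_pos.2 hpos
  have hsq : ((1 + p.1)⁻¹)^2 < 4 := by nlinarith
  have hsqpos : 0 < ((1 + p.1)⁻¹)^2 := by positivity
  have harg : 0 < 1 - 4 * p.2 * ((1 + p.1)⁻¹)^2 := by nlinarith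
  refine ⟨hne, ne_of_gt harg, ?_⟩
  have := Real.sqrt_nonneg (1 - 4 * p.2 * ((1 + p.1)⁻¹)^2)
  linarith

lemma contDiffOn_Ffun : ContDiffOn ℝ ∞ Ffun Uset := by
  intro p hp
  obtain ⟨h1, h2, h3⟩ := Uset_facts hp
  apply ContDiffAt.contDiffWithinAt
  have hc1 : ContDiffAt ℝ ∞ (fun q : ℝ × ℝ => (1 + q.1)⁻¹) p :=
    ((contDiffAt_const.add contDiffAt_fst)).inv h1
  have hc2 : ContDiffAt ℝ ∞ (fun q : ℝ × ℝ => 1 - 4 * q.2 * ((1 + q.1)⁻¹)^2) p := by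
    exact contDiffAt_const.sub ((contDiffAt_const.mul contDiffAt_snd).mul (hc1.pow 2))
  have hc3 : ContDiffAt ℝ ∞
      (fun q : ℝ × ℝ => Real.sqrt (1 - 4 * q.2 * ((1 + q.1)⁻¹)^2)) p :=
    hc2.sqrt h2
  exact (contDiffAt_const.mul hc1).mul ((contDiffAt_const.add hc3).inv h3)

lemma Ffun_zero : Ffun (0, 0) = -1 := by
  simp [Ffun]
  norm_num

lemma contDiffOn_fderiv_apply {f : ℝ × ℝ → ℝ} (hf : ContDiffOn ℝ ∞ f Uset) (w : ℝ × ℝ) :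
    ContDiffOn ℝ ∞ (fun p => fderiv ℝ f p w) Uset := by
  have h1 : ContDiffOn ℝ ∞ (fderiv ℝ f) Uset :=
    hf.fderiv_of_isOpen isOpen_Uset (by norm_num)
  exact h1.clm_apply contDiffOn_const

lemma hasFDerivAt_of_mem {f : ℝ × ℝ → ℝ} (hf : ContDiffOn ℝ ∞ f Uset) {p : ℝ × ℝ}
    (hp : p ∈ Uset) : HasFDerivAt f (fderiv ℝ f p) p :=
  (((hf.contDiffAt (isOpen_Uset.mem_nhds hp))).differentiableAt (by norm_num)).hasFDerivAt

lemma hasDerivAt_rep (x : ℝ) (N : ℕ) (c : ℕ → ℝ × ℝ → ℝ)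
    (hc : ∀ k, ContDiffOn ℝ ∞ (c k) Uset)
    (γ : ℝ → ℝ × ℝ) (w : ℝ × ℝ) (s : ℝ) (hγ : HasDerivAt γ w s)
    (hp : γ s ∈ Uset) :
    HasDerivAt (fun s' => Real.exp (x * Ffun (γ s')) * ∑ k ∈ Finset.range N, x ^ k * c k (γ s'))
      (Real.exp (x * Ffun (γ s)) *
        ((x * (fderiv ℝ Ffun (γ s) w)) * ∑ k ∈ Finset.range N, x ^ k * c k (γ s)
          + ∑ k ∈ Finset.range N, x ^ k * (fderiv ℝ (c k) (γ s) w))) s := by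
  have hF : HasDerivAt (fun s' => Ffun (γ s')) (fderiv ℝ Ffun (γ s) w) s :=
    (hasFDerivAt_of_mem contDiffOn_Ffun hp).comp_hasDerivAt s hγ
  have hexp : HasDerivAt (fun s' => Real.exp (x * Ffun (γ s')))
      (Real.exp (x * Ffun (γ s)) * (x * fderiv ℝ Ffun (γ s) w)) s :=
    (hF.const_mul x).exp
  have hsum : HasDerivAt (fun s' => ∑ k ∈ Finset.range N, x ^ k * c k (γ s'))
      (∑ k ∈ Finset.range N, x ^ k * fderiv ℝ (c k) (γ s) w) s := by
    apply HasDerivAt.fun_sum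
    intro k _
    exact ((hasFDerivAt_of_mem (hc k) hp).comp_hasDerivAt s hγ).const_mul (x ^ k)
  have := hexp.fun_mul hsum
  refine this.congr_deriv ?_
  ring

lemma sum_shift {g : ℕ → ℝ} (n : ℕ) (h0 : g 0 = 0) (htop : g (n+1) = 0) :
    ∑ i ∈ Finset.range (n+1), g (i+1) = ∑ k ∈ Finset.range (n+1), g k := by
  rw [Finset.sum_range_succ' g n, h0, add_zero, Finset.sum_range_succ, htop, add_zero]

lemma step (w₀ : ℝ × ℝ) (n : ℕ) (c : ℕ → ℝ × ℝ → ℝ)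
    (hc : ∀ k, ContDiffOn ℝ ∞ (c k) Uset)
    (hc0 : ∀ p, fderiv ℝ (c 0) p = 0)
    (hctop : ∀ k, n < k → c k = fun _ => 0) :
    ∃ c' : ℕ → ℝ × ℝ → ℝ,
      (∀ k, ContDiffOn ℝ ∞ (c' k) Uset) ∧
      (c' 0 = fun _ => 0) ∧
      (∀ p, fderiv ℝ (c' 0) p = 0) ∧
      (∀ k, n + 1 < k → c' k = fun _ => 0) ∧
      (∀ (x C : ℝ) (γ : ℝ → ℝ × ℝ) (s : ℝ), HasDerivAt γ (C • w₀) s → γ s ∈ Uset →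
        HasDerivAt
          (fun s' => Real.exp (x * Ffun (γ s')) * ∑ k ∈ Finset.range (n+1), x ^ k * c k (γ s'))
          (Real.exp (x * Ffun (γ s)) *
            (C * ∑ k ∈ Finset.range (n+2), x ^ k * c' k (γ s))) s) := by
  set Fv : (ℝ × ℝ) → ℝ := fun p => fderiv ℝ Ffun p w₀ with hFv
  set D : (ℕ → ℝ × ℝ → ℝ) := fun k p => fderiv ℝ (c k) p w₀ with hD
  set c' : ℕ → ℝ × ℝ → ℝ :=
    fun k p => (if k = 0 then 0 else Fv p * c (k-1) p) + D k p with hc'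
  have hc'0 : c' 0 = fun _ => 0 := by
    funext p
    simp [hc', hD, hc0 p]
  refine ⟨c', ?_, hc'0, ?_, ?_, ?_⟩
  · intro k
    rcases k with _ | k
    · exact (contDiffOn_fderiv_apply (hc 0) w₀).congr fun p _ => by simp [hc', hD, hc0 p]
    · exact (((contDiffOn_fderiv_apply contDiffOn_Ffun w₀).mul (hc k)).add
        (contDiffOn_fderiv_apply (hc (k+1)) w₀)).congr fun p _ => by simp [hc', hD, hFv]
  · intro p
    rw [hc'0]
    exact fderiv_const_apply 0
  · intro k hk
    funext p
    have h1 : c (k-1) = fun _ => 0 := hctop _ (by omega)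
    have h2 : c k = fun _ => 0 := hctop _ (by omega)
    have hk0 : k ≠ 0 := by omega
    simp [hc', hD, hk0, h1, h2, fderiv_const_apply]
  · intro x C γ s hγ hp
    have h := hasDerivAt_rep x (n+1) c hc γ (C • w₀) s hγ hp
    convert h using 1
    set p := γ s with hpdef
    have hsm : ∀ f : ℝ × ℝ → ℝ, fderiv ℝ f p (C • w₀) = C * fderiv ℝ f p w₀ := by
      intro f; rw [map_smul]; rfl
    have S := ∑ k ∈ Finset.range (n+1), x ^ k * c k p
    have e1 : ∑ k ∈ Finset.range (n+2), x ^ k * c' k p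
        = x * Fv p * (∑ k ∈ Finset.range (n+1), x ^ k * c k p)
          + ∑ k ∈ Finset.range (n+1), x ^ k * D k p := by
      rw [Finset.sum_range_succ' _ (n+1)]
      have hterm : ∀ i ∈ Finset.range (n+1),
          x ^ (i+1) * c' (i+1) p
            = x ^ (i+1) * (Fv p * c i p) + x ^ (i+1) * D (i+1) p := by
        intro i _
        simp only [hc', Nat.succ_ne_zero, if_false, Nat.add_sub_cancel]
        ring
      rw [Finset.sum_congr rfl hterm, Finset.sum_add_distrib]
      have e2 : ∑ i ∈ Finset.range (n+1), x ^ (i+1) * (Fv p * c i p)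
          = x * Fv p * ∑ k ∈ Finset.range (n+1), x ^ k * c k p := by
        rw [Finset.mul_sum]
        exact Finset.sum_congr rfl fun i _ => by ring
      have e3 : ∑ i ∈ Finset.range (n+1), x ^ (i+1) * D (i+1) p
          = ∑ k ∈ Finset.range (n+1), x ^ k * D k p := by
        apply sum_shift (g := fun k => x ^ k * D k p)
        · simp [hD, hc0 p]
        · have hz : D (n+1) p = 0 := by
            show fderiv ℝ (c (n+1)) p w₀ = 0
            rw [hctop (n+1) (by omega)]
            simp
          rw [hz]; ring
      have e0 : x ^ 0 * c' 0 p = 0 := by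
        rw [hc'0]; simp
      rw [e2, e3, e0, add_zero]
    rw [e1]
    simp only [hsm]
    rw [show (∑ k ∈ Finset.range (n+1), x ^ k * (C * fderiv ℝ (c k) p w₀))
        = C * ∑ k ∈ Finset.range (n+1), x ^ k * D k p from by
      rw [Finset.mul_sum]; exact Finset.sum_congr rfl fun i _ => by rw [hD]; ring]
    have hfv : (fderiv ℝ Ffun p) w₀ = Fv p := rfl
    rw [hfv]
    ring

lemma master (j m : ℕ) : ∃ c : ℕ → ℝ × ℝ → ℝ,
    (∀ k, ContDiffOn ℝ ∞ (c k) Uset) ∧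
    (1 ≤ j + m → c 0 = fun _ => 0) ∧
    (∀ p, fderiv ℝ (c 0) p = 0) ∧
    (∀ k, j + m < k → c k = fun _ => 0) ∧
    (∀ (x A B a b : ℝ), (a * A, b * B) ∈ Uset →
      pderiv2 j m (fun a' b' => Real.exp (x * Ffun (a' * A, b' * B))) a b
        = Real.exp (x * Ffun (a * A, b * B)) *
            (A ^ j * B ^ m * ∑ k ∈ Finset.range (j + m + 1), x ^ k * c k (a * A, b * B))) := by
  induction m with
  | zero =>
    induction j with
    | zero =>
      refine ⟨fun k _ => if k = 0 then 1 else 0, ?_, ?_, ?_, ?_, ?_⟩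
      · intro k; exact contDiffOn_const
      · intro h; omega
      · intro p; exact fderiv_const_apply _
      · intro k hk
        have : k ≠ 0 := by omega
        funext p; simp [this]
      · intro x A B a b hmem
        simp [pderiv2, iteratedDeriv_zero]
    | succ j ihj =>
      obtain ⟨c, hc, hc0, hcd0, hctop, hrep⟩ := ihj
      obtain ⟨c', hc', hc'0, hc'd0, hc'top, hstep⟩ :=
        step ((1:ℝ), (0:ℝ)) (j + 0) c hc hcd0 hctop
      refine ⟨c', hc', fun _ => hc'0, hc'd0, fun k hk => hc'top k (by omega), ?_⟩
      intro x A B a b hmem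
      have hderiv : pderiv2 (j+1) 0 (fun a' b' => Real.exp (x * Ffun (a' * A, b' * B))) a b
          = deriv (fun a' => pderiv2 j 0
              (fun a' b' => Real.exp (x * Ffun (a' * A, b' * B))) a' b) a := by
        simp only [pderiv2, iteratedDeriv_zero, iteratedDeriv_succ]
      rw [hderiv]
      have hev : (fun a' => pderiv2 j 0
            (fun a' b' => Real.exp (x * Ffun (a' * A, b' * B))) a' b)
          =ᶠ[nhds a] (fun a' => (A ^ j * B ^ 0) *
            (Real.exp (x * Ffun (a' * A, b * B)) *
              ∑ k ∈ Finset.range (j + 0 + 1), x ^ k * c k (a' * A, b * B))) := by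
        have hopen : IsOpen {a' : ℝ | (a' * A, b * B) ∈ Uset} :=
          isOpen_Uset.preimage (by fun_prop)
        filter_upwards [hopen.mem_nhds hmem] with a' ha'
        rw [hrep x A B a' b ha']
        ring
      rw [hev.deriv_eq]
      have hγ : HasDerivAt (fun a' => (a' * A, b * B)) (A • ((1:ℝ), (0:ℝ))) a := by
        have h1 : HasDerivAt (fun a' : ℝ => a' * A) A a := by
          simpa using (hasDerivAt_id a).mul_const A
        have h2 : HasDerivAt (fun _ : ℝ => b * B) 0 a := hasDerivAt_const a (b * B)
        have := h1.prodMk h2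
        convert this using 1
        simp [Prod.ext_iff]
      have hd := (hstep x A (fun a' => (a' * A, b * B)) a hγ hmem).const_mul (A ^ j * B ^ 0)
      rw [hd.deriv]
      ring_nf
  | succ m ihm =>
    obtain ⟨c, hc, hc0, hcd0, hctop, hrep⟩ := ihm
    obtain ⟨c', hc', hc'0, hc'd0, hc'top, hstep⟩ :=
      step ((0:ℝ), (1:ℝ)) (j + m) c hc hcd0 hctop
    refine ⟨c', hc', fun _ => hc'0, hc'd0, fun k hk => hc'top k (by omega), ?_⟩
    intro x A B a b hmem
    have hderiv : pderiv2 j (m+1) (fun a' b' => Real.exp (x * Ffun (a' * A, b' * B))) a b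
        = deriv (fun b' => pderiv2 j m
            (fun a' b' => Real.exp (x * Ffun (a' * A, b' * B))) a b') b := by
      simp only [pderiv2, iteratedDeriv_succ]
    rw [hderiv]
    have hev : (fun b' => pderiv2 j m
          (fun a' b' => Real.exp (x * Ffun (a' * A, b' * B))) a b')
        =ᶠ[nhds b] (fun b' => (A ^ j * B ^ m) *
          (Real.exp (x * Ffun (a * A, b' * B)) *
            ∑ k ∈ Finset.range (j + m + 1), x ^ k * c k (a * A, b' * B))) := by
      have hopen : IsOpen {b' : ℝ | (a * A, b' * B) ∈ Uset} :=
        isOpen_Uset.preimage (by fun_prop)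
      filter_upwards [hopen.mem_nhds hmem] with b' hb'
      rw [hrep x A B a b' hb']
      ring
    rw [hev.deriv_eq]
    have hγ : HasDerivAt (fun b' => (a * A, b' * B)) (B • ((0:ℝ), (1:ℝ))) b := by
      have h1 : HasDerivAt (fun _ : ℝ => a * A) 0 b := hasDerivAt_const b (a * A)
      have h2 : HasDerivAt (fun b' : ℝ => b' * B) B b := by
        simpa using (hasDerivAt_id b).mul_const B
      have := h1.prodMk h2
      convert this using 1
      simp [Prod.ext_iff]
    have hd := (hstep x B (fun b' => (a * A, b' * B)) b hγ hmem).const_mul (A ^ j * B ^ m)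
    rw [hd.deriv]
    ring_nf

theorem stmt5 (σ σ₁ σ₂ εs : ℝ) (hσ : 1 ≤ σ) (hσ₁ : 0 ≤ σ₁) (h12 : σ₁ < σ / 2)
    (h22 : σ / 2 < σ₂) (h2σ : σ₂ ≤ σ) (hε : 0 < εs)
    (j m : ℕ) :
    ∃ P : Polynomial ℝ, P.natDegree ≤ j + m ∧ (1 ≤ j + m → P.eval 0 = 0) ∧
      ∀ r ∈ Set.Ioc (0:ℝ) εs, ∀ t > (0:ℝ),
        pderiv2 j m (fun a' b' => Real.exp (lam1 σ σ₁ σ₂ r a' b' * t)) 0 0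
          = Real.exp (-(r ^ (2*(σ-σ₁))) * t)
              * r ^ (2*(j:ℝ)*(σ₂-σ₁) + 2*(m:ℝ)*(σ-2*σ₁))
              * P.eval (r ^ (2*(σ-σ₁)) * t) := by
  obtain ⟨c, hc, hc0, hcd0, hctop, hrep⟩ := master j m
  refine ⟨∑ k ∈ Finset.range (j+m+1), Polynomial.C (c k ((0:ℝ),(0:ℝ))) * Polynomial.X ^ k,
    ?_, ?_, ?_⟩
  · apply Polynomial.natDegree_sum_le_of_forall_le
    intro i hi
    exact (Polynomial.natDegree_C_mul_X_pow_le _ _).trans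
      (by have := Finset.mem_range.1 hi; omega)
  · intro h
    rw [Polynomial.eval_finset_sum]
    apply Finset.sum_eq_zero
    intro k _
    rcases k with _ | k
    · simp [hc0 h]
    · simp [zero_pow]
  · intro r hr t ht
    have hr0 : (0:ℝ) < r := hr.1
    have hfun : (fun a' b' => Real.exp (lam1 σ σ₁ σ₂ r a' b' * t))
        = fun a' b' => Real.exp ((r ^ (2*(σ-σ₁)) * t) *
            Ffun (a' * r ^ (2*(σ₂-σ₁)), b' * r ^ (2*(σ-2*σ₁)))) := by
      funext a' b'
      congr 1
      simp only [lam1, Gamma1, Gamma2, Ffun]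
      rw [show (1 - 4*b'*r ^ (2*(σ-2*σ₁)) * ((1 + a' * r ^ (2*(σ₂-σ₁)))⁻¹)^2)
          = 1 - 4*(b' * r ^ (2*(σ-2*σ₁))) * ((1 + a' * r ^ (2*(σ₂-σ₁)))⁻¹)^2 from by ring]
      ring
    rw [hfun]
    have hmem0 : ((0:ℝ) * r ^ (2*(σ₂-σ₁)), (0:ℝ) * r ^ (2*(σ-2*σ₁))) ∈ Uset := by
      simpa using mem_Uset_zero
    have h1 := hrep (r ^ (2*(σ-σ₁)) * t) (r ^ (2*(σ₂-σ₁))) (r ^ (2*(σ-2*σ₁))) 0 0 hmem0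
    simp only [zero_mul] at h1
    rw [h1, Ffun_zero]
    have hAB : (r ^ (2*(σ₂-σ₁)))^j * (r ^ (2*(σ-2*σ₁)))^m
        = r ^ (2*(j:ℝ)*(σ₂-σ₁) + 2*(m:ℝ)*(σ-2*σ₁)) := by
      rw [← Real.rpow_natCast (r ^ (2*(σ₂-σ₁))) j, ← Real.rpow_natCast (r ^ (2*(σ-2*σ₁))) m,
        ← Real.rpow_mul hr0.le, ← Real.rpow_mul hr0.le, ← Real.rpow_add hr0]
      congr 1
      ring
    have hPeval : Polynomial.eval (r ^ (2*(σ-σ₁)) * t)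
        (∑ k ∈ Finset.range (j+m+1), Polynomial.C (c k ((0:ℝ),(0:ℝ))) * Polynomial.X ^ k)
        = ∑ k ∈ Finset.range (j+m+1), (r ^ (2*(σ-σ₁)) * t) ^ k * c k ((0:ℝ),(0:ℝ)) := by
      rw [Polynomial.eval_finset_sum]
      exact Finset.sum_congr rfl fun k _ => by
        rw [Polynomial.eval_mul, Polynomial.eval_C, Polynomial.eval_pow, Polynomial.eval_X,
          mul_comm]
    rw [hPeval, ← hAB]
    rw [show (r ^ (2*(σ-σ₁)) * t) * (-1:ℝ) = -(r ^ (2*(σ-σ₁))) * t from by ring]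
    ring
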